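/- arXiv:1110.0760 — 8 statements merged into one kernel-verified Lean document; each statement's English description precedes it below -/
import Mathlib

section
/- Let α be a word with α ≠ ‾α and let w ∈ αΣ* ∩ Σ*‾α be non-α-crossing. Then every word obtainable from w by a single hairpin completion (left or right, with respect to α) is also non-α-crossing. -/
open List

namespace Hairpin

variable {S : Type} [DecidableEq S]

/-- Antimorphic extension of an involution to words. -/
def comp (bar : S → S) (w : List S) : List S := (w.map bar).reverse

/-- Right hairpin completion w.r.t. primer `a`. -/
def RH (bar : S → S) (a w z : List S) : Prop :=
  ∃ γ β : List S, w = γ ++ a ++ β ++ comp bar a ∧ z = w ++ comp bar γ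

/-- Left hairpin completion w.r.t. primer `a`. -/
def LH (bar : S → S) (a w z : List S) : Prop :=
  ∃ γ β : List S, w = a ++ β ++ comp bar a ++ comp bar γ ∧ z = γ ++ w

/-- One hairpin completion step. -/
def HC (bar : S → S) (a w z : List S) : Prop := RH bar a w z ∨ LH bar a w z

/-- Iterated hairpin completion `H*_α(w)`. -/
def HCstar (bar : S → S) (a w : List S) : Set (List S) :=
  { z | Relation.ReflTransGen (HC bar a) w z }

/-- `w` is non-`a`-crossing: every occurrence of `a` starts no later than
every occurrence of `comp bar a`. -/
def NonCrossing (bar : S → S) (a w : List S) : Prop :=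
  ∀ i j : ℕ, a <+: w.drop i → comp bar a <+: w.drop j → i ≤ j

/-- The set of `a`-prefixes of `w`. -/
def Pa (a w : List S) : Set (List S) := { u | u ++ a <+: w }

/-- The set of `‾a`-suffixes of `w` (the elements are the words `‾v`). -/
def Sa (bar : S → S) (a w : List S) : Set (List S) :=
  { x | comp bar a ++ x <:+ w }

/-- The set of complements of `‾a`-suffixes of `w`, i.e. `‾(S_‾α(w))`. -/
def barSa (bar : S → S) (a w : List S) : Set (List S) :=
  { v | comp bar a ++ comp bar v <:+ w }

/-- Kleene star of a set of words: all finite concatenations. -/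
def star (X : Set (List S)) : Set (List S) :=
  { x | ∃ l : List (List S), (∀ y ∈ l, y ∈ X) ∧ x = l.flatten }

/-- `ind_α(x)`: the number of occurrences of `a` in `x ++ a` other than the
suffix occurrence, i.e. the number of positions `i < |x|` where `a` occurs. -/
def inda (a x : List S) : ℕ :=
  ((Finset.range x.length).filter (fun i => a <+: (x ++ a).drop i)).card

set_option linter.unusedSectionVars false

lemma comp_append (bar : S → S) (u v : List S) :
    comp bar (u ++ v) = comp bar v ++ comp bar u := by simp [comp]

lemma comp_length (bar : S → S) (u : List S) : (comp bar u).length = u.length := by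
  simp [comp]

lemma comp_comp {bar : S → S} (hbar : Function.Involutive bar) (u : List S) :
    comp bar (comp bar u) = u := by
  simp [comp, List.map_reverse, List.map_map, hbar.comp_self]

/-- reflection of occurrences under `comp` -/
lemma refl_occ (bar : S → S) {u x : List S} {i : ℕ} (h : u <+: x.drop i)
    (hle : i + u.length ≤ x.length) :
    comp bar u <+: (comp bar x).drop (x.length - i - u.length) := by
  obtain ⟨t, ht⟩ := h
  have hx : x = x.take i ++ (u ++ t) := by rw [ht, List.take_append_drop]
  have hlt : t.length = x.length - i - u.length := by
    have h1 : (x.drop i).length = x.length - i := by simp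
    rw [← ht] at h1
    simp at h1
    omega
  have hcx : comp bar x = comp bar t ++ (comp bar u ++ comp bar (x.take i)) := by
    conv_lhs => rw [hx]
    rw [comp_append, comp_append, List.append_assoc]
  rw [hcx, ← hlt, show t.length = (comp bar t).length from (comp_length bar t).symm,
    List.drop_left]
  exact ⟨comp bar (x.take i), rfl⟩

/-- NonCrossing is preserved by complementation. -/
lemma noncrossing_comp {bar : S → S} (hbar : Function.Involutive bar) {a w : List S}
    (hnc : NonCrossing bar a w) : NonCrossing bar a (comp bar w) := by
  intro i j hi hj
  have hla : a.length = (comp bar a).length := (comp_length bar a).symm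
  have hne : a ≠ [] := by
    intro h
    have h2 : comp bar a = [] := by simp [h, comp]
    have := hnc 1 0 (by rw [h]; exact List.nil_prefix) (by rw [h2]; exact List.nil_prefix)
    omega
  have hal : 0 < a.length := List.length_pos_iff.mpr hne
  have hi1 : a.length ≤ w.length - i := by
    have := hi.length_le
    rwa [List.length_drop, comp_length] at this
  have hj1 : a.length ≤ w.length - j := by
    have := hj.length_le
    rwa [List.length_drop, comp_length, comp_length] at this
  have hi2 : i + a.length ≤ w.length := by omega
  have hj2 : j + a.length ≤ w.length := by omega
  have H1 := refl_occ bar hi (by rwa [comp_length])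
  have H2 := refl_occ bar hj (by rw [comp_length, comp_length]; omega)
  rw [comp_comp hbar, comp_length] at H1 H2
  rw [comp_comp hbar] at H2
  rw [comp_length] at H2
  have := hnc _ _ H2 H1
  omega

lemma prefix_of_take_eq {u x y : List S} {j n : ℕ} (h : u <+: x.drop j)
    (hxy : x.take n = y.take n) (hn : j + u.length ≤ n) : u <+: y.drop j := by
  rw [List.prefix_iff_eq_take] at h
  have e : ∀ l : List S, (l.drop j).take u.length = (l.take (j + u.length)).drop j := by
    intro l
    rw [List.drop_take]
    congr 1
    omega
  have htk : x.take (j + u.length) = y.take (j + u.length) := by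
    have h1 : x.take (j + u.length) = (x.take n).take (j + u.length) := by
      rw [List.take_take]; congr 1; omega
    have h2 : y.take (j + u.length) = (y.take n).take (j + u.length) := by
      rw [List.take_take]; congr 1; omega
    rw [h1, h2, hxy]
  have key : (x.drop j).take u.length = (y.drop j).take u.length := by
    rw [e x, e y, htk]
  rw [key] at h
  exact List.prefix_iff_eq_take.mpr h

lemma prefix_trunc {u x y : List S} (h : u <+: x ++ y) (hl : u.length ≤ x.length) :
    u <+: x := by
  rw [List.prefix_iff_eq_take] at h ⊢
  rw [h, List.take_append]
  have : u.length - x.length = 0 := by omega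
  simp [this]

/-- Core lemma: RH-shaped extension preserves noncrossing. -/
lemma rh_core {bar : S → S} (hbar : Function.Involutive bar) (a γ β : List S)
    (hne : a ≠ [])
    (hnc : NonCrossing bar a (γ ++ a ++ β ++ comp bar a)) :
    NonCrossing bar a ((γ ++ a ++ β ++ comp bar a) ++ comp bar γ) := by
  set w := γ ++ a ++ β ++ comp bar a with hw
  set z := w ++ comp bar γ with hz
  have hal : 0 < a.length := List.length_pos_iff.mpr hne
  have hwl : w.length = γ.length + a.length + β.length + a.length := by
    simp only [hw, List.length_append, comp_length]
  have hzl : z.length = w.length + γ.length := by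
    simp only [hz, List.length_append, comp_length]
  -- occurrence of a at position γ.length in w
  have hag : a <+: w.drop γ.length := by
    have h0 : w = γ ++ (a ++ β ++ comp bar a) := by simp [hw, List.append_assoc]
    rw [h0, List.drop_left' rfl]
    exact ⟨β ++ comp bar a, by simp [List.append_assoc]⟩
  -- occurrence of ‾a at position w.length - a.length in w
  have has : comp bar a <+: w.drop (w.length - a.length) := by
    have h1 : w = (γ ++ a ++ β) ++ comp bar a := by simp [hw]
    have h2 : (γ ++ a ++ β).length = w.length - a.length := by
      simp only [List.length_append]; omega
    rw [h1, List.drop_left' h2]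
  -- prefixes of comp z and w agree up to γ.length + a.length
  have hpre : (comp bar z).take (γ.length + a.length) = w.take (γ.length + a.length) := by
    have h1 : comp bar z = (γ ++ a) ++ (comp bar β ++ comp bar a ++ comp bar γ) := by
      simp [hz, hw, comp_append, comp_comp hbar, List.append_assoc]
    have h2 : w = (γ ++ a) ++ (β ++ comp bar a) := by simp [hw, List.append_assoc]
    rw [h1, h2, List.take_left' (by simp), List.take_left' (by simp)]
  intro i j hi hj
  -- basic length facts
  have hi1 : a.length ≤ z.length - i := by
    have := hi.length_le; rwa [List.length_drop] at this
  have hile : i + a.length ≤ z.length := by omega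
  have hj1 : a.length ≤ z.length - j := by
    have := hj.length_le; rwa [List.length_drop, comp_length] at this
  have hjle : j + a.length ≤ z.length := by omega
  -- Step 1: i + |a| ≤ |w|
  have hkey : i + a.length ≤ w.length := by
    by_contra hcon
    push_neg at hcon
    have H := refl_occ bar hi hile
    set j' := z.length - i - a.length with hj'
    have hj'lt : j' + a.length ≤ γ.length + a.length := by omega
    have H2 : comp bar a <+: w.drop j' :=
      prefix_of_take_eq H hpre (by rw [comp_length]; omega)
    have := hnc γ.length j' hag H2
    omega
  -- hence the occurrence of a lies inside w
  have hiw : a <+: w.drop i := by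
    have hzd : z.drop i = w.drop i ++ comp bar γ := by
      rw [hz, List.drop_append_of_le_length (by omega)]
    rw [hzd] at hi
    exact prefix_trunc hi (by rw [List.length_drop]; omega)
  by_cases hjc : j + a.length ≤ w.length
  · have hjw : comp bar a <+: w.drop j := by
      have hzd : z.drop j = w.drop j ++ comp bar γ := by
        rw [hz, List.drop_append_of_le_length (by omega)]
      rw [hzd] at hj
      exact prefix_trunc hj (by rw [comp_length, List.length_drop]; omega)
    exact hnc i j hiw hjw
  · omega


theorem stmt1 (bar : S → S) (hbar : Function.Involutive bar)
    (a w : List S) (ha : a ≠ comp bar a)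
    (hp : a <+: w) (hs : comp bar a <:+ w)
    (hnc : NonCrossing bar a w) :
    ∀ z : List S, HC bar a w z → NonCrossing bar a z := by
  have hne : a ≠ [] := by
    intro h
    apply ha
    rw [h]
    simp [comp]
  rintro z (⟨γ, β, hw, hz⟩ | ⟨γ, β, hw, hz⟩)
  · subst hw hz
    exact rh_core hbar a γ β hne hnc
  · have hcw : comp bar w = γ ++ a ++ comp bar β ++ comp bar a := by
      rw [hw]
      simp [comp_append, comp_comp hbar, List.append_assoc]
    have hcz : comp bar z = (γ ++ a ++ comp bar β ++ comp bar a) ++ comp bar γ := by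
      rw [hz, comp_append, hcw]
    have hnc' : NonCrossing bar a (γ ++ a ++ comp bar β ++ comp bar a) := by
      rw [← hcw]
      exact noncrossing_comp hbar hnc
    have h2 : NonCrossing bar a (comp bar z) := by
      rw [hcz]
      exact rh_core hbar a γ (comp bar β) hne hnc'
    have h3 := noncrossing_comp hbar h2
    rwa [comp_comp hbar] at h3


end Hairpin
end

section
/- A word w ∈ αΣ* ∩ Σ*‾α is non-α-crossing if and only if w contains exactly one factor that is minimal with respect to the language αΣ* ∩ Σ*‾α. -/
open List

namespace Hairpin

variable {S : Type} [DecidableEq S]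

/-! ### Auxiliary machinery for `stmt2` -/

/-- `Good a b w i e`: the factor of `w` from position `i` to `e` starts with `a`
and ends with `b` (where `b` is assumed to have the same length as `a`). -/
def Good (a b w : List S) (i e : ℕ) : Prop :=
  i + a.length ≤ e ∧ e ≤ w.length ∧ a <+: w.drop i ∧ b <+: w.drop (e - a.length)

/-- `MinG a b w i e`: minimal good interval. -/
def MinG (a b w : List S) (i e : ℕ) : Prop :=
  Good a b w i e ∧ ∀ i' e', i ≤ i' → e' ≤ e → Good a b w i' e' → i' = i ∧ e' = e

lemma occ_shift {y x w : List S} {i s : ℕ} (hy : y <+: x.drop s) (hx : x <+: w.drop i) :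
    y <+: w.drop (i + s) := by
  have h := hx.drop s
  rw [List.drop_drop] at h
  exact hy.trans h

lemma factor_spec {a b w : List S} (hb : b.length = a.length)
    {i e : ℕ} (h : Good a b w i e) :
    ((w.drop i).take (e - i)) <+: w.drop i ∧ a <+: ((w.drop i).take (e - i)) ∧
      b <:+ ((w.drop i).take (e - i)) ∧ ((w.drop i).take (e - i)).length = e - i := by
  obtain ⟨h1, h2, h3, h4⟩ := h
  have hlen : ((w.drop i).take (e - i)).length = e - i := by
    rw [List.length_take, List.length_drop]; omega
  refine ⟨List.take_prefix _ _, ?_, ?_, hlen⟩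
  · have ha' : a = (w.drop i).take a.length := List.prefix_iff_eq_take.mp h3
    rw [ha']
    exact List.take_prefix_take_left (by omega)
  · have hbe : b = (w.drop (e - a.length)).take a.length := by
      have := List.prefix_iff_eq_take.mp h4; rwa [hb] at this
    have key : ((w.drop i).take (e - i)).drop (e - i - a.length) = b := by
      rw [List.drop_take, List.drop_drop]
      have h5 : i + (e - i - a.length) = e - a.length := by omega
      have h6 : e - i - (e - i - a.length) = a.length := by omega
      rw [h5, h6, ← hbe]
    rw [← key]; exact List.drop_suffix _ _

lemma exists_min {a b w : List S} (hm : 0 < a.length) :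
    ∀ n i e, e - i ≤ n → Good a b w i e →
      ∃ i' e', i ≤ i' ∧ e' ≤ e ∧ MinG a b w i' e' := by
  intro n
  induction n with
  | zero =>
    intro i e hn hG
    exfalso; have := hG.1; omega
  | succ n ih =>
    intro i e hn hG
    by_cases hMin : ∀ i' e', i ≤ i' → e' ≤ e → Good a b w i' e' → i' = i ∧ e' = e
    · exact ⟨i, e, le_rfl, le_rfl, hG, hMin⟩
    · push_neg at hMin
      obtain ⟨i', e', hi, he, hG', hne⟩ := hMin
      have g1 := hG.1
      have g1' := hG'.1
      have hlt : e' - i' < e - i := by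
        by_cases h : i' = i
        · subst h; have := hne rfl; omega
        · omega
      obtain ⟨i'', e'', h1, h2, h3⟩ := ih i' e' (by omega) hG'
      exact ⟨i'', e'', hi.trans h1, h2.trans he, h3⟩

lemma pair_to_min {bar : S → S} {a w : List S} (hane : a ≠ [])
    (hc : (comp bar a).length = a.length) {i : ℕ} {x : List S}
    (h1 : x <+: w.drop i) (h2 : a <+: x) (h3 : comp bar a <:+ x)
    (h4 : ∀ y : List S, y <:+: x → y ≠ x → ¬(a <+: y ∧ comp bar a <:+ y)) :
    MinG a (comp bar a) w i (i + x.length) := by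
  have hm : 0 < a.length := List.length_pos_iff.mpr hane
  have hmx : a.length ≤ x.length := h2.length_le
  have hxw : x.length ≤ w.length - i := by
    have := h1.length_le; rwa [List.length_drop] at this
  have hiw : i + x.length ≤ w.length := by omega
  obtain ⟨t, ht⟩ := h3
  have htl : t.length + a.length = x.length := by
    have := congrArg List.length ht
    rwa [List.length_append, hc] at this
  have hB : comp bar a <+: w.drop (i + t.length) := by
    have hx' : comp bar a <+: x.drop t.length := by
      rw [← ht, List.drop_left]
    exact occ_shift hx' h1
  refine ⟨⟨by omega, hiw, h2.trans h1, ?_⟩, ?_⟩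
  · have harith : i + x.length - a.length = i + t.length := by omega
    rw [harith]; exact hB
  · intro i' e' hi he hG'
    obtain ⟨hy1, hy2, hy3, hylen⟩ := factor_spec hc hG'
    have g1 := hG'.1
    have hxt : x = (w.drop i).take x.length := List.prefix_iff_eq_take.mp h1
    have harith2 : i + (i' - i) = i' := by omega
    have hxd : x.drop (i' - i) = (w.drop i').take (x.length - (i' - i)) := by
      conv_lhs => rw [hxt]
      rw [List.drop_take, List.drop_drop, harith2]
    have hyx : (w.drop i').take (e' - i') <+: x.drop (i' - i) := by
      rw [hxd]
      exact List.take_prefix_take_left (by omega)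
    have hyinf : (w.drop i').take (e' - i') <:+: x :=
      hyx.isInfix.trans (List.drop_suffix _ _).isInfix
    by_cases hxy : (w.drop i').take (e' - i') = x
    · have hl : x.length = e' - i' := by rw [← hxy]; exact hylen
      exact ⟨by omega, by omega⟩
    · exact absurd ⟨hy2, hy3⟩ (h4 _ hyinf hxy)

lemma min_to_pair {bar : S → S} {a w : List S}
    (hc : (comp bar a).length = a.length) {i e : ℕ}
    (h : MinG a (comp bar a) w i e) :
    ((w.drop i).take (e - i)) <+: w.drop i ∧
    (a <+: ((w.drop i).take (e - i)) ∧ comp bar a <:+ ((w.drop i).take (e - i))) ∧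
    ∀ y : List S, y <:+: ((w.drop i).take (e - i)) → y ≠ ((w.drop i).take (e - i)) →
      ¬(a <+: y ∧ comp bar a <:+ y) := by
  obtain ⟨hG, hMin⟩ := h
  obtain ⟨hx1, hx2, hx3, hxlen⟩ := factor_spec hc hG
  refine ⟨hx1, ⟨hx2, hx3⟩, ?_⟩
  intro y hinf hne hcon
  obtain ⟨hay, hby⟩ := hcon
  obtain ⟨s, t, hst⟩ := hinf
  have hys : y <+: ((w.drop i).take (e - i)).drop s.length := by
    rw [← hst, List.append_assoc, List.drop_left]
    exact ⟨t, rfl⟩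
  have hyw : y <+: w.drop (i + s.length) := occ_shift hys hx1
  have hA' : a <+: w.drop (i + s.length) := hay.trans hyw
  obtain ⟨t', ht'⟩ := hby
  have hbt : comp bar a <+: y.drop t'.length := by
    rw [← ht', List.drop_left]
  have hB' : comp bar a <+: w.drop (i + s.length + t'.length) := occ_shift hbt hyw
  have hty : t'.length + a.length = y.length := by
    have := congrArg List.length ht'
    rwa [List.length_append, hc] at this
  have hslen : s.length + y.length + t.length = ((w.drop i).take (e - i)).length := by
    have := congrArg List.length hst
    simp only [List.length_append] at this
    omega
  have hma : a.length ≤ y.length := hay.length_le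
  obtain ⟨g1, g2, g3, g4⟩ := hG
  have hGood' : Good a (comp bar a) w (i + s.length) (i + s.length + y.length) := by
    refine ⟨by omega, by omega, hA', ?_⟩
    have harith : i + s.length + y.length - a.length = i + s.length + t'.length := by omega
    rw [harith]; exact hB'
  obtain ⟨hie, hee⟩ := hMin _ _ (by omega) (by omega) hGood'
  have hs0 : s.length = 0 := by omega
  have hyx : y.length = ((w.drop i).take (e - i)).length := by omega
  have hfin : y <+: ((w.drop i).take (e - i)) := by
    have := hys; rw [hs0, List.drop_zero] at this; exact this
  exact hne (hfin.eq_of_length hyx)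

theorem stmt2 (bar : S → S) (hbar : Function.Involutive bar)
    (a w : List S) (ha : a ≠ comp bar a)
    (hp : a <+: w) (hs : comp bar a <:+ w) :
    NonCrossing bar a w ↔
      ∃! p : ℕ × List S,
        p.2 <+: w.drop p.1 ∧
        (a <+: p.2 ∧ comp bar a <:+ p.2) ∧
        ∀ y : List S, y <:+: p.2 → y ≠ p.2 → ¬(a <+: y ∧ comp bar a <:+ y) := by
  classical
  have hcl : (comp bar a).length = a.length := by simp [comp]
  have hane : a ≠ [] := by
    rintro rfl; exact ha (by simp [comp])
  have hm : 0 < a.length := List.length_pos_iff.mpr hane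
  have hA0 : a <+: w.drop 0 := by simpa using hp
  obtain ⟨t0, ht0⟩ := hs
  have ht0l : t0.length = w.length - a.length := by
    have := congrArg List.length ht0
    rw [List.length_append, hcl] at this
    omega
  have hBend : comp bar a <+: w.drop (w.length - a.length) := by
    rw [← ht0l, ← ht0, List.drop_left]
  constructor
  · -- NonCrossing → ∃!
    intro hnc
    have hbex : ∃ j, comp bar a <+: w.drop j := ⟨w.length - a.length, hBend⟩
    set l := Nat.find hbex with hldef
    have hBl : comp bar a <+: w.drop l := Nat.find_spec hbex
    have hlmin : ∀ j, comp bar a <+: w.drop j → l ≤ j := fun j hj => Nat.find_min' hbex hj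
    set r := Nat.findGreatest (fun i => a <+: w.drop i) w.length with hrdef
    have hAr : a <+: w.drop r := Nat.findGreatest_spec (P := fun k => a <+: w.drop k) (Nat.zero_le _) hA0
    have hrmax : ∀ i, a <+: w.drop i → i ≤ r := by
      intro i hi
      have hle := hi.length_le
      rw [List.length_drop] at hle
      exact Nat.le_findGreatest (P := fun k => a <+: w.drop k) (by omega) hi
    have hrl : r ≤ l := hnc r l hAr hBl
    have hlw : l + a.length ≤ w.length := by
      have := hBl.length_le
      rw [List.length_drop, hcl] at this
      omega
    have hGood : Good a (comp bar a) w r (l + a.length) := by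
      refine ⟨by omega, by omega, hAr, ?_⟩
      rw [Nat.add_sub_cancel]; exact hBl
    have hMinG : MinG a (comp bar a) w r (l + a.length) := by
      refine ⟨hGood, ?_⟩
      intro i' e' hi he hG'
      obtain ⟨g1, g2, g3, g4⟩ := hG'
      have h1 : i' ≤ r := hrmax i' g3
      have h2 : l ≤ e' - a.length := hlmin _ g4
      exact ⟨by omega, by omega⟩
    obtain ⟨hq1, hq2, hq3⟩ := min_to_pair hcl hMinG
    refine ⟨(r, (w.drop r).take (l + a.length - r)), ⟨hq1, hq2, hq3⟩, ?_⟩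
    rintro ⟨qi, qx⟩ ⟨hp1, ⟨hp2, hp3⟩, hp4⟩
    have hMq : MinG a (comp bar a) w qi (qi + qx.length) :=
      pair_to_min hane hcl hp1 hp2 hp3 hp4
    obtain ⟨⟨g1, g2, g3, g4⟩, hMinq⟩ := hMq
    have h1 : qi ≤ r := hrmax qi g3
    have h2 : l ≤ qi + qx.length - a.length := hlmin _ g4
    obtain ⟨hre, hle'⟩ := hMinq r (l + a.length) h1 (by omega) hGood
    have hxlen : qx.length = l + a.length - r := by omega
    have hxeq : qx = (w.drop qi).take qx.length := List.prefix_iff_eq_take.mp hp1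
    have : qx = (w.drop r).take (l + a.length - r) := by
      rw [hxeq, hxlen, hre]
    rw [this, hre]
  · -- ∃! → NonCrossing
    intro hE i j hAi hBj
    by_contra hij
    push_neg at hij
    have hAil := hAi.length_le
    rw [List.length_drop] at hAil
    have hBjl := hBj.length_le
    rw [List.length_drop, hcl] at hBjl
    have hG1 : Good a (comp bar a) w 0 (j + a.length) := by
      refine ⟨by omega, by omega, hA0, ?_⟩
      rw [Nat.add_sub_cancel]; exact hBj
    have hG2 : Good a (comp bar a) w i w.length :=
      ⟨by omega, le_rfl, hAi, hBend⟩
    obtain ⟨i1, e1, hi1, he1, hM1⟩ := exists_min hm (j + a.length) 0 (j + a.length) (by omega) hG1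
    obtain ⟨i2, e2, hi2, he2, hM2⟩ := exists_min hm w.length i w.length (by omega) hG2
    obtain ⟨hq1, hq2, hq3⟩ := min_to_pair hcl hM1
    obtain ⟨hr1, hr2, hr3⟩ := min_to_pair hcl hM2
    obtain ⟨p, -, hUniq⟩ := hE
    have heq1 := hUniq (i1, (w.drop i1).take (e1 - i1)) ⟨hq1, hq2, hq3⟩
    have heq2 := hUniq (i2, (w.drop i2).take (e2 - i2)) ⟨hr1, hr2, hr3⟩
    have : i1 = i2 := by
      have := heq1.trans heq2.symm
      exact congrArg Prod.fst this
    have hb1 := hM1.1.1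
    have hb2 := hM2.1.1
    omega

end Hairpin
end

section
/- Let w ∈ αΣ* ∩ Σ*‾α be a non-α-crossing word whose set of ‾α-suffixes S_‾α(w) has at least 2 elements, and let u be the longest α-prefix of w. Then |u| + 2|α| ≤ |w|. -/
open List

namespace Hairpin

variable {S : Type} [DecidableEq S]

/-- Pointwise characterization of `a <+: w.drop n`. -/
lemma occ_iff (a w : List S) (n : ℕ) :
    a <+: w.drop n ↔ ∀ i < a.length, w[n + i]? = a[i]? := by
  constructor
  · rintro ⟨t, ht⟩ i hi
    rw [← List.getElem?_drop, ← ht, List.getElem?_append_left hi]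
  · intro h
    have hta : a = (w.drop n).take a.length := by
      apply List.ext_getElem?
      intro i
      rw [List.getElem?_take]
      by_cases hi : i < a.length
      · simp only [hi, if_pos]
        rw [List.getElem?_drop, h i hi]
      · rw [if_neg hi, List.getElem?_eq_none (by omega)]
    refine ⟨(w.drop n).drop a.length, ?_⟩
    have h2 := List.take_append_drop a.length (w.drop n)
    rw [← hta] at h2
    exact h2

lemma key (bar : S → S) (hbar : Function.Involutive bar)
    (a w : List S) (hnc : NonCrossing bar a w)
    (u : List S) (hu : u ∈ Pa a w)
    {x y : List S} (hx : x ∈ Sa bar a w) (hy : y ∈ Sa bar a w)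
    (hlt : x.length < y.length) :
    u.length + 2 * a.length ≤ w.length := by
  classical
  set k := a.length with hk0
  set ca := comp bar a with hcadef
  have hcal : ca.length = k := by simp [hcadef, comp, hk0]
  obtain ⟨s, hs⟩ := hx
  obtain ⟨t, ht⟩ := hy
  -- prefix of `a` at position `u.length`
  have h1p : a <+: w.drop u.length := by
    obtain ⟨r, hr⟩ := hu
    refine ⟨r, ?_⟩
    rw [← hr, List.append_assoc, List.drop_left]
  -- occurrences of `ca` at positions `t.length` and `s.length`
  have h2p : ca <+: w.drop t.length := ⟨y, by rw [← ht, List.drop_left]⟩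
  have h3p : ca <+: w.drop s.length := ⟨x, by rw [← hs, List.drop_left]⟩
  have hud : u.length ≤ t.length := hnc u.length t.length h1p h2p
  have e1 : s.length + (k + x.length) = w.length := by
    rw [← hs]; simp [hcal, comp, hk0]
  have e2 : t.length + (k + y.length) = w.length := by
    rw [← ht]; simp [hcal, comp, hk0]
  obtain ⟨p, hp⟩ : ∃ p, y.length = x.length + p := ⟨_, (Nat.add_sub_cancel' hlt.le).symm⟩
  obtain ⟨d, hd⟩ : ∃ d, t.length = u.length + d := ⟨_, (Nat.add_sub_cancel' hud).symm⟩
  have hp1 : 0 < p := by omega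
  by_contra hcon
  push_neg at hcon
  have hklt : d + p + x.length < k := by omega
  have hsl : s.length = t.length + p := by omega
  -- pointwise versions
  have h1 : ∀ i < k, w[u.length + i]? = a[i]? := (occ_iff a w u.length).mp h1p
  have h2 : ∀ i < k, w[t.length + i]? = ca[i]? := by
    intro i hi
    exact (occ_iff ca w t.length).mp h2p i (by omega)
  have h3 : ∀ i < k, w[t.length + p + i]? = ca[i]? := by
    intro i hi
    have := (occ_iff ca w s.length).mp h3p i (by omega)
    rwa [hsl] at this
  -- relation between `a` and `ca` entrywise
  have hca : ∀ i < k, ca[i]? = (a[k - 1 - i]?).map bar := by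
    intro i hi
    rw [hcadef]
    show ((a.map bar).reverse)[i]? = _
    rw [List.getElem?_reverse (by simpa [hk0] using hi), List.length_map, List.getElem?_map]
  -- period of `ca`
  have h5 : ∀ i, i + p < k → ca[i + p]? = ca[i]? := by
    intro i hipk
    have a1 := h2 (i + p) hipk
    have a2 := h3 i (by omega)
    have e : t.length + (i + p) = t.length + p + i := by omega
    rw [e, a2] at a1
    exact a1.symm
  -- period of `a`
  have h6 : ∀ i, i + p < k → a[i + p]? = a[i]? := by
    intro i hipk
    have h5' := h5 (k - 1 - i - p) (by omega)
    have e : k - 1 - i - p + p = k - 1 - i := by omega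
    rw [e, hca (k - 1 - i) (by omega), hca (k - 1 - i - p) (by omega)] at h5'
    have e3 : k - 1 - (k - 1 - i) = i := by omega
    have e4 : k - 1 - (k - 1 - i - p) = i + p := by omega
    rw [e3, e4] at h5'
    exact Option.map_injective hbar.injective h5'.symm
  -- main induction : `a` occurs at `u.length + m * p` as long as `m * p ≤ d + p`
  have main : ∀ m, m * p ≤ d + p → ∀ i < k, w[u.length + m * p + i]? = a[i]? := by
    intro m
    induction m with
    | zero =>
      intro _ i hi
      have e : u.length + 0 * p + i = u.length + i := by omega
      rw [e]; exact h1 i hi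
    | succ m ih =>
      intro hm i hi
      have hsm : (m + 1) * p = m * p + p := by ring
      have hmp : m * p ≤ d := by omega
      by_cases hc : d ≤ m * p + i
      · have hb : m * p + i - d < k := by omega
        have ea : u.length + (m + 1) * p + i = t.length + p + (m * p + i - d) := by omega
        rw [ea, h3 _ hb]
        have hiw := ih (by omega) i hi
        have eb : u.length + m * p + i = t.length + (m * p + i - d) := by omega
        rw [eb, h2 _ hb] at hiw
        exact hiw
      · have ec : u.length + (m + 1) * p + i = u.length + m * p + (i + p) := by omega
        rw [ec, ih (by omega) (i + p) (by omega)]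
        exact h6 i (by omega)
  obtain ⟨q, r', hqr, hr'⟩ : ∃ q r', d = q * p + r' ∧ r' < p :=
    ⟨d / p, d % p, (Nat.div_add_mod' d p).symm, Nat.mod_lt _ hp1⟩
  have hqp : (q + 1) * p = q * p + p := by ring
  have hm1 : (q + 1) * p ≤ d + p := by omega
  have hm2 : d < (q + 1) * p := by omega
  have hocc : a <+: w.drop (u.length + (q + 1) * p) :=
    (occ_iff a w _).mpr (main (q + 1) hm1)
  have hfin := hnc (u.length + (q + 1) * p) t.length hocc h2p
  omega

theorem stmt5 (bar : S → S) (hbar : Function.Involutive bar)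
    (a w : List S) (ha : a ≠ comp bar a)
    (hp : a <+: w) (hs : comp bar a <:+ w)
    (hnc : NonCrossing bar a w)
    (hS2 : ∃ x ∈ Sa bar a w, ∃ y ∈ Sa bar a w, x ≠ y)
    (u : List S) (hu : u ∈ Pa a w)
    (humax : ∀ x ∈ Pa a w, x.length ≤ u.length) :
    u.length + 2 * a.length ≤ w.length := by
  obtain ⟨x, hx, y, hy, hxy⟩ := hS2
  rcases lt_trichotomy x.length y.length with h | h | h
  · exact key bar hbar a w hnc u hu hx hy h
  · exfalso
    obtain ⟨s, hs⟩ := hx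
    obtain ⟨t, ht⟩ := hy
    have hst : s.length = t.length := by
      have e1 := congrArg List.length hs
      have e2 := congrArg List.length ht
      simp only [List.length_append] at e1 e2
      omega
    obtain ⟨-, heq⟩ := List.append_inj (hs.trans ht.symm) hst
    exact hxy (List.append_cancel_left heq)
  · exact key bar hbar a w hnc u hu hy hx h


end Hairpin
end

section
/- Let w ∈ αΣ* ∩ Σ*‾α, let u ∈ P_α(w) and ‾v ∈ S_‾α(w). If v belongs to (P_α(uα))*, then ‾(S_‾α(‾α‾v)) ⊆ (P_α(uα))*. -/
open List

namespace Hairpin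

variable {S : Type} [DecidableEq S]

lemma aux_C {a y z : List S} (h1 : a <+: y ++ a) (h2 : a <+: z) : a <+: y ++ z := by
  obtain ⟨z', rfl⟩ := h2
  obtain ⟨s, hs⟩ := h1
  exact ⟨s ++ z', by rw [← List.append_assoc, hs, List.append_assoc]⟩

lemma aux_B {a u : List S} (ha : a <+: u ++ a) :
    ∀ l : List (List S), (∀ y ∈ l, y ∈ Pa a (u ++ a)) → a <+: l.flatten ++ a := by
  intro l
  induction l with
  | nil => intro _; simp
  | cons y t ih =>
    intro h
    have hy : y ++ a <+: u ++ a := h y (by simp)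
    have hya : a <+: y ++ a :=
      List.prefix_of_prefix_length_le ha hy (by simp)
    have ht := ih (fun z hz => h z (by simp [hz]))
    simpa [List.append_assoc] using aux_C hya ht

lemma aux_D {a u : List S} (ha : a <+: u ++ a) :
    ∀ l : List (List S), (∀ y ∈ l, y ∈ Pa a (u ++ a)) →
    ∀ x : List S, x ++ a <+: l.flatten ++ a → x ∈ star (Pa a (u ++ a)) := by
  intro l
  induction l with
  | nil =>
    intro _ x hx
    have hlen := hx.length_le
    simp only [List.flatten_nil, List.nil_append, List.length_append] at hlen
    have hx0 : x = [] := List.eq_nil_of_length_eq_zero (by omega)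
    subst hx0
    exact ⟨[], by simp, rfl⟩
  | cons y t ih =>
    intro h x hx
    have hy : y ++ a <+: u ++ a := h y (by simp)
    have ht : ∀ z ∈ t, z ∈ Pa a (u ++ a) := fun z hz => h z (by simp [hz])
    by_cases hc : x.length ≤ y.length
    · have hta : a <+: t.flatten ++ a := aux_B ha t ht
      obtain ⟨r, hr⟩ := hta
      have hx' : x ++ a <+: (y ++ a) ++ r := by
        have heq : (y :: t).flatten ++ a = (y ++ a) ++ r := by
          simp only [List.flatten_cons, List.append_assoc, ← hr]
        rwa [heq] at hx
      have hxy : x ++ a <+: y ++ a :=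
        List.prefix_of_prefix_length_le hx' (List.prefix_append _ _)
          (by simp; omega)
      exact ⟨[x], by simpa [Pa] using hxy.trans hy, by simp⟩
    · have hyx : y <+: x := by
        have h1 : y <+: (y :: t).flatten ++ a := by
          simp [List.flatten_cons, List.append_assoc]
        have h2 : x <+: (y :: t).flatten ++ a := (List.prefix_append x a).trans hx
        exact List.prefix_of_prefix_length_le h1 h2 (by omega)
      obtain ⟨x', rfl⟩ := hyx
      have hx2 : x' ++ a <+: t.flatten ++ a := by
        have hx3 := hx
        simp only [List.flatten_cons, List.append_assoc] at hx3
        exact (List.prefix_append_right_inj y).mp hx3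
      obtain ⟨l', hl', hfl⟩ := ih ht x' hx2
      refine ⟨y :: l', ?_, by simp [hfl]⟩
      intro z hz
      rcases List.mem_cons.mp hz with rfl | hz
      · simpa [Pa] using hy
      · exact hl' z hz

theorem stmt7 (bar : S → S) (hbar : Function.Involutive bar)
    (a w u v : List S) (hp : a <+: w) (hs : comp bar a <:+ w)
    (hu : u ∈ Pa a w) (hv : v ∈ barSa bar a w)
    (h1 : v ∈ star (Pa a (u ++ a))) :
    barSa bar a (comp bar a ++ comp bar v) ⊆ star (Pa a (u ++ a)) := by
  intro x hx
  have ha : a <+: u ++ a := List.prefix_of_prefix_length_le hp hu (by simp)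
  obtain ⟨l, hl, rfl⟩ := h1
  have hx0 : comp bar (x ++ a) <:+ comp bar (l.flatten ++ a) := by
    simpa [comp, barSa, List.map_append, List.reverse_append] using hx
  have hx1 : ((x ++ a).map bar).reverse <:+ ((l.flatten ++ a).map bar).reverse := hx0
  have hx2 : (x ++ a).map bar <+: (l.flatten ++ a).map bar :=
    List.reverse_suffix.mp hx1
  have hx3 : x ++ a <+: l.flatten ++ a := by
    have := hx2.map bar
    simpa [List.map_map, hbar.comp_self] using this
  exact aux_D ha l hl x hx3

end Hairpin
end

section
/- Let x ∈ αΣ*α⁻¹ (i.e., α is a prefix of xα) and y ∈ Σ*. Then ind_α(yx) = ind_α(y) + ind_α(x), where ind_α(z) counts the number of occurrences of α as a factor of zα other than the suffix occurrence. -/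
open List

namespace Hairpin

variable {S : Type} [DecidableEq S]

lemma key_prefix {a x : List S} (hx : a <+: x ++ a) (u : List S) :
    (a <+: u ++ (x ++ a)) ↔ (a <+: u ++ a) := by
  constructor
  · intro h
    rcases le_or_gt a.length u.length with hle | hlt
    · exact (List.prefix_of_prefix_length_le h (List.prefix_append u (x ++ a)) hle).trans
        (List.prefix_append u a)
    · have hu : u <+: a :=
        List.prefix_of_prefix_length_le (List.prefix_append u (x ++ a)) h hlt.le
      obtain ⟨s, hs⟩ := hu
      have hs' : u ++ s <+: u ++ (x ++ a) := by rw [hs]; exact h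
      have hsx : s <+: x ++ a := (List.prefix_append_right_inj u).mp hs'
      have hsa : s <+: a := by
        apply List.prefix_of_prefix_length_le hsx hx
        have := congrArg List.length hs
        simp at this
        omega
      have := (List.prefix_append_right_inj u).mpr hsa
      rwa [hs] at this
  · intro h
    obtain ⟨t, ht⟩ := hx
    have : u ++ (x ++ a) = (u ++ a) ++ t := by rw [← ht]; simp
    rw [this]
    exact h.trans (List.prefix_append _ t)

theorem stmt9 (a x y : List S) (hx : a <+: x ++ a) :
    inda a (y ++ x) = inda a y + inda a x := by
  classical
  unfold inda
  rw [Finset.card_filter, Finset.card_filter, Finset.card_filter,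
    List.length_append, Finset.sum_range_add]
  congr 1
  · apply Finset.sum_congr rfl
    intro i hi
    rw [Finset.mem_range] at hi
    have h1 : (y ++ x ++ a).drop i = y.drop i ++ (x ++ a) := by
      rw [List.append_assoc, List.drop_append_of_le_length hi.le]
    have h2 : (y ++ a).drop i = y.drop i ++ a :=
      List.drop_append_of_le_length hi.le
    simp only [h1, h2, key_prefix hx]
  · apply Finset.sum_congr rfl
    intro i _
    have h1 : (y ++ x ++ a).drop (y.length + i) = (x ++ a).drop i := by
      rw [List.append_assoc, List.drop_append]
      simp
    rw [h1]

end Hairpin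
end

section
/- Let w be a word, let P_α(w) = {u₀, …, u_{m−1}} with u₀ <_p u₁ <_p ⋯ <_p u_{m−1} (ordered by the strict prefix order), let x ∈ αΣ*α⁻¹, and let 0 ≤ j < m. If x is a suffix of u_j, then u_j = u_{j − ind_α(x)} · x. -/
open List

namespace Hairpin

variable {S : Type} [DecidableEq S]

theorem stmt10 (a w : List S) (m : ℕ) (u : Fin m → List S)
    (huchain : ∀ i j : Fin m, i < j → u i <+: u j ∧ u i ≠ u j)
    (hPu : Pa a w = Set.range u)
    (x : List S) (hx : a <+: x ++ a) (j : Fin m) (hsuf : x <:+ u j) :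
    ∃ h : inda a x ≤ (j : ℕ),
      u j = u ⟨(j : ℕ) - inda a x,
        lt_of_le_of_lt (Nat.sub_le _ _) j.isLt⟩ ++ x := by
  obtain ⟨p, hp⟩ := hsuf
  have hmem : ∀ y : List S, y ++ a <+: w → ∃ t : Fin m, u t = y := by
    intro y hy
    have : y ∈ Pa a w := hy
    rw [hPu] at this; exact this
  have hwmem : ∀ t : Fin m, u t ++ a <+: w := by
    intro t
    have : u t ∈ Pa a w := by rw [hPu]; exact ⟨t, rfl⟩
    exact this
  have hwj : u j ++ a <+: w := hwmem j
  have hlen : ∀ i j : Fin m, i < j → (u i).length < (u j).length := fun i j hij =>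
    lt_of_le_of_ne (huchain i j hij).1.length_le
      (fun he => (huchain i j hij).2 ((huchain i j hij).1.eq_of_length he))
  have hlen_le : ∀ i j : Fin m, i ≤ j → (u i).length ≤ (u j).length := by
    intro i j hij
    rcases eq_or_lt_of_le hij with h | h
    · rw [h]
    · exact (hlen i j h).le
  have hrev_le : ∀ i j : Fin m, (u i).length ≤ (u j).length → i ≤ j := by
    intro i j h
    by_contra hc
    exact absurd (hlen j i (not_le.mp hc)) (not_lt.mpr h)
  have hrev : ∀ i j : Fin m, (u i).length < (u j).length → i < j := by
    intro i j h
    by_contra hc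
    exact absurd (hlen_le j i (not_lt.mp hc)) (not_le.mpr h)
  have hwp : p ++ a <+: w := by
    have h1 : p ++ a <+: u j ++ a := by
      rw [← hp, List.append_assoc]
      exact (List.prefix_append_right_inj p).mpr hx
    exact h1.trans hwj
  obtain ⟨k, hk⟩ := hmem p hwp
  have hlenj : (u j).length = p.length + x.length := by
    rw [← hp, List.length_append]
  set T := (Finset.range x.length).filter (fun i => a <+: (x ++ a).drop i) with hT
  have hdropa : ∀ s : ℕ, s < x.length → (x ++ a).drop s = x.drop s ++ a := by
    intro s hs
    rw [List.drop_append, Nat.sub_eq_zero_of_le hs.le, List.drop_zero]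
  have key : ∀ t : Fin m, k ≤ t → t < j →
      u t = p ++ x.take ((u t).length - p.length) ∧ ((u t).length - p.length) ∈ T := by
    intro t hkt htj
    have hwt : u t ++ a <+: w := hwmem t
    have hlt : (u t).length < (u j).length := hlen t j htj
    have hge : p.length ≤ (u t).length := hk ▸ hlen_le k t hkt
    have h1 : u t ++ a <+: u j ++ a :=
      List.prefix_of_prefix_length_le hwt hwj (by simp [hlt.le])
    have h2 : u t <+: u j :=
      List.prefix_of_prefix_length_le ((List.prefix_append (u t) a).trans h1)
        (List.prefix_append (u j) a) hlt.le
    set s := (u t).length - p.length with hs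
    have hslt : s < x.length := by omega
    have hut : u t = p ++ x.take s := by
      have h3 := List.prefix_iff_eq_take.mp h2
      rw [h3, ← hp, List.take_append,
        List.take_of_length_le hge]
    refine ⟨hut, ?_⟩
    rw [hT, Finset.mem_filter, Finset.mem_range]
    refine ⟨hslt, ?_⟩
    rw [hdropa s hslt]
    have h4 : x.take s ++ a <+: x ++ a := by
      rw [← List.prefix_append_right_inj p, ← List.append_assoc, ← hut,
        ← List.append_assoc, hp]
      exact h1
    have h6 : x.take s ++ a <+: x.take s ++ (x.drop s ++ a) := by
      rw [← List.append_assoc, List.take_append_drop]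
      exact h4
    exact (List.prefix_append_right_inj _).mp h6
  have hkj : (k : ℕ) ≤ (j : ℕ) := by
    have : k ≤ j := hrev_le k j (by rw [hk]; omega)
    exact this
  have hcard : (Finset.Ico (k : ℕ) (j : ℕ)).card = T.card := by
    apply Finset.card_bij (fun t ht =>
      (u ⟨t, lt_trans (Finset.mem_Ico.mp ht).2 j.isLt⟩).length - p.length)
    · intro t ht
      obtain ⟨h1, h2⟩ := Finset.mem_Ico.mp ht
      exact (key _ (Fin.le_def.mpr h1) (Fin.lt_def.mpr h2)).2
    · intro t1 ht1 t2 ht2 heq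
      obtain ⟨h11, h12⟩ := Finset.mem_Ico.mp ht1
      obtain ⟨h21, h22⟩ := Finset.mem_Ico.mp ht2
      have hg1 : p.length ≤ (u ⟨t1, lt_trans h12 j.isLt⟩).length :=
        hk ▸ hlen_le k _ (Fin.le_def.mpr h11)
      have hg2 : p.length ≤ (u ⟨t2, lt_trans h22 j.isLt⟩).length :=
        hk ▸ hlen_le k _ (Fin.le_def.mpr h21)
      have hleq : (u ⟨t1, lt_trans h12 j.isLt⟩).length
          = (u ⟨t2, lt_trans h22 j.isLt⟩).length := by omega
      have e1 : (⟨t1, lt_trans h12 j.isLt⟩ : Fin m) = ⟨t2, lt_trans h22 j.isLt⟩ :=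
        le_antisymm (hrev_le _ _ hleq.le) (hrev_le _ _ hleq.ge)
      exact Fin.mk.inj_iff.mp e1
    · intro s hs
      rw [hT, Finset.mem_filter, Finset.mem_range] at hs
      obtain ⟨hslt, hpre⟩ := hs
      rw [hdropa s hslt] at hpre
      have hpx : (p ++ x.take s) ++ a <+: w := by
        have h1 : (p ++ x.take s) ++ a <+: p ++ (x ++ a) := by
          rw [List.append_assoc, List.prefix_append_right_inj]
          conv_rhs => rw [← List.take_append_drop s x]
          rw [List.append_assoc, List.prefix_append_right_inj]
          exact hpre
        rw [← List.append_assoc, hp] at h1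
        exact h1.trans hwj
      obtain ⟨t, ht⟩ := hmem _ hpx
      have hlent : (u t).length = p.length + s := by
        rw [ht, List.length_append, List.length_take, Nat.min_eq_left hslt.le]
      have hkt : (k : ℕ) ≤ (t : ℕ) := hrev_le k t (by rw [hk]; omega)
      have htj : (t : ℕ) < (j : ℕ) := hrev t j (by omega)
      refine ⟨(t : ℕ), Finset.mem_Ico.mpr ⟨hkt, htj⟩, ?_⟩
      simp only [Fin.eta]
      omega
  have hind : inda a x = (j : ℕ) - (k : ℕ) := by
    rw [inda, ← hT, ← hcard, Nat.card_Ico]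
  refine ⟨by omega, ?_⟩
  have hkeq : (⟨(j : ℕ) - inda a x,
      lt_of_le_of_lt (Nat.sub_le _ _) j.isLt⟩ : Fin m) = k := by
    apply Fin.ext
    simp only
    omega
  rw [hkeq, hk]
  exact hp.symm

end Hairpin
end

section
/- Let w ∈ αΣ* and let P_α(w) = {u₀, …, u_{m−1}} with u₀ <_p ⋯ <_p u_{m−1}. If 0 ≤ i ≤ j < m and u_i is a suffix of u_j, then u_j = u_{j−i} · u_i. -/
open List

namespace Hairpin

variable {S : Type} [DecidableEq S]

theorem stmt11 (a w : List S) (hw : a <+: w) (m : ℕ) (u : Fin m → List S)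
    (huchain : ∀ i j : Fin m, i < j → u i <+: u j ∧ u i ≠ u j)
    (hPu : Pa a w = Set.range u)
    (i j : Fin m) (hij : i ≤ j) (hsuf : u i <:+ u j) :
    u j = u ⟨(j : ℕ) - (i : ℕ),
      lt_of_le_of_lt (Nat.sub_le _ _) j.isLt⟩ ++ u i := by
  classical
  have hmem : ∀ l : Fin m, u l ++ a <+: w := fun l => by
    have : u l ∈ Pa a w := by rw [hPu]; exact Set.mem_range_self l
    exact this
  have ha : ∀ l : Fin m, a <+: u l ++ a := fun l =>
    List.prefix_of_prefix_length_le hw (hmem l) (by simp)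
  have huinj : Function.Injective u := by
    intro p q hpq
    by_contra hne
    rcases lt_or_gt_of_ne hne with h | h
    · exact (huchain p q h).2 hpq
    · exact (huchain q p h).2 hpq.symm
  have hlen : ∀ {p q : Fin m}, p < q → (u p).length < (u q).length := by
    intro p q hpq
    obtain ⟨hpre, hne⟩ := huchain p q hpq
    exact lt_of_le_of_ne hpre.length_le fun h => hne (hpre.eq_of_length h)
  have hle : ∀ {p q : Fin m}, p ≤ q → u p ++ a <+: u q ++ a := by
    intro p q hpq
    rcases eq_or_lt_of_le hpq with h | h
    · rw [h]
    · refine List.prefix_of_prefix_length_le (hmem p) (hmem q) ?_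
      have := hlen h
      simp only [List.length_append]
      omega
  have hord : ∀ {p q : Fin m}, u p ++ a <+: u q ++ a → p ≤ q := by
    intro p q hpre
    by_contra h
    push_neg at h
    have h1 := hlen h
    have h2 := hpre.length_le
    simp only [List.length_append] at h2
    omega
  obtain ⟨t, ht⟩ := hsuf
  have htpre : t ++ a <+: u j ++ a := by
    rw [← ht, List.append_assoc, List.prefix_append_right_inj]
    exact ha i
  obtain ⟨k, hk⟩ : ∃ k, u k = t := by
    have : t ∈ Pa a w := htpre.trans (hmem j)
    rwa [hPu] at this
  obtain ⟨z, hz, hzi⟩ : ∃ z, u z = ([] : List S) ∧ z ≤ i := by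
    have : ([] : List S) ∈ Pa a w := by simpa [Pa] using hw
    rw [hPu] at this
    obtain ⟨z, hz⟩ := this
    exact ⟨z, hz, hord (by rw [hz]; simpa using ha i)⟩
  set T : Fin m → Finset (List S) := fun x => (Finset.Iic x).image u with hT
  have hcardT : ∀ x : Fin m, (T x).card = (x : ℕ) + 1 := by
    intro x
    rw [hT]
    simp only
    rw [Finset.card_image_of_injective _ huinj, Fin.card_Iic]
  have hmemT : ∀ (x : Fin m) (y : List S), y ∈ T x ↔ ∃ l, l ≤ x ∧ u l = y := by
    intro x y
    simp [hT, Finset.mem_image, Finset.mem_Iic]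
  have hsplit : T j = T k ∪ (T i).image (t ++ ·) := by
    ext y
    simp only [Finset.mem_union, Finset.mem_image, hmemT]
    constructor
    · rintro ⟨l, hl, rfl⟩
      have hpre : u l ++ a <+: u j ++ a := hle hl
      by_cases hlt : (u l).length ≤ t.length
      · left
        refine ⟨l, hord ?_, rfl⟩
        rw [hk]
        refine List.prefix_of_prefix_length_le hpre htpre ?_
        simp only [List.length_append]; omega
      · right
        push_neg at hlt
        have h1 : t <+: u l :=
          List.prefix_of_prefix_length_le ((List.prefix_append t a).trans htpre)
            ((List.prefix_append (u l) a).trans hpre) (le_of_lt hlt)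
        obtain ⟨r, hr⟩ := h1
        have hr2 : r ++ a <+: u i ++ a := by
          have : t ++ (r ++ a) <+: t ++ (u i ++ a) := by
            rw [← List.append_assoc, ← List.append_assoc, hr, ht]
            exact hpre
          rwa [List.prefix_append_right_inj] at this
        obtain ⟨l', hl'⟩ : ∃ l', u l' = r := by
          have : r ∈ Pa a w := hr2.trans (hmem i)
          rwa [hPu] at this
        exact ⟨r, ⟨l', hord (by rw [hl']; exact hr2), hl'⟩, hr⟩
    · rintro (⟨l, hl, rfl⟩ | ⟨r, ⟨l, hl, rfl⟩, rfl⟩)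
      · refine ⟨l, hord ((hle hl).trans ?_), rfl⟩
        rw [hk]; exact htpre
      · have hpre : (t ++ u l) ++ a <+: u j ++ a := by
          rw [← ht, List.append_assoc, List.append_assoc, List.prefix_append_right_inj]
          exact hle hl
        obtain ⟨l'', hl''⟩ : ∃ l'', u l'' = t ++ u l := by
          have : t ++ u l ∈ Pa a w := hpre.trans (hmem j)
          rwa [hPu] at this
        exact ⟨l'', hord (by rw [hl'']; exact hpre), hl''⟩
  have hinter : T k ∩ (T i).image (t ++ ·) = {t} := by
    ext y
    simp only [Finset.mem_inter, Finset.mem_image, Finset.mem_singleton, hmemT]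
    constructor
    · rintro ⟨⟨l, hl, rfl⟩, ⟨r, ⟨l', _, rfl⟩, hr⟩⟩
      have h1 : (u l).length ≤ t.length := by
        have := (hle hl).length_le
        rw [hk] at this
        simp only [List.length_append] at this
        omega
      have h2 : (u l).length = t.length + (u l').length := by
        rw [← hr, List.length_append]
      have h3 : (u l').length = 0 := by omega
      rw [← hr, List.length_eq_zero_iff.mp h3, List.append_nil]
    · rintro rfl
      exact ⟨⟨k, le_refl k, hk⟩, ⟨[], ⟨z, hzi, hz⟩, by simp⟩⟩
  have hcard := Finset.card_union_add_card_inter (T k) ((T i).image (t ++ ·))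
  rw [← hsplit, hinter, hcardT, hcardT, Finset.card_singleton,
    Finset.card_image_of_injective _ (fun x y h => List.append_cancel_left h), hcardT] at hcard
  have hkji : (k : ℕ) = (j : ℕ) - (i : ℕ) := by omega
  have : (⟨(j : ℕ) - (i : ℕ), lt_of_le_of_lt (Nat.sub_le _ _) j.isLt⟩ : Fin m) = k :=
    Fin.ext (by simp [hkji])
  rw [this, hk, ht]


end Hairpin
end

section
/- Let w ∈ αΣ* ∩ Σ*‾α be non-α-crossing. Then H*_α(w) ⊆ (P_α(w) ∪ ‾(S_‾α(w)))* · w · (‾(P_α(w)) ∪ S_‾α(w))*. -/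
open List

set_option linter.unusedSectionVars false

namespace Hairpin

variable {S : Type} [DecidableEq S]

lemma comp_nil (bar : S → S) : comp bar ([] : List S) = [] := rfl

lemma comp_suffix_of_prefix {bar : S → S} {u v : List S} (h : u <+: v) :
    comp bar u <:+ comp bar v := by
  obtain ⟨t, rfl⟩ := h
  exact ⟨comp bar t, (comp_append bar u t).symm⟩

lemma comp_prefix_of_suffix {bar : S → S} {u v : List S} (h : u <:+ v) :
    comp bar u <+: comp bar v := by
  obtain ⟨t, rfl⟩ := h
  exact ⟨comp bar t, (comp_append bar t u).symm⟩

/-! ### Splitting lemma -/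

lemma split_left {x y u t v : List S} (h : x ++ y = u ++ t ++ v)
    (hle : u.length + t.length ≤ x.length) :
    ∃ v₁, x = u ++ t ++ v₁ ∧ v = v₁ ++ y := by
  have hut : u ++ t <+: x ++ y := ⟨v, by rw [h, List.append_assoc]⟩
  have h1 : u ++ t <+: x :=
    List.prefix_of_prefix_length_le hut (List.prefix_append x y) (by simpa using hle)
  obtain ⟨v₁, hv₁⟩ := h1
  refine ⟨v₁, by rw [← hv₁, List.append_assoc], ?_⟩
  have h2 : (u ++ t) ++ (v₁ ++ y) = (u ++ t) ++ v := by
    rw [← List.append_assoc, hv₁, h, List.append_assoc]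
  exact (List.append_cancel_left h2).symm

/-! ### Star lemmas -/

lemma star_nil (X : Set (List S)) : ([] : List S) ∈ star X := ⟨[], by simp, rfl⟩

lemma star_single {X : Set (List S)} {u : List S} (h : u ∈ X) : u ∈ star X :=
  ⟨[u], by simpa using h, by simp⟩

lemma star_append {X : Set (List S)} {x y : List S}
    (hx : x ∈ star X) (hy : y ∈ star X) : x ++ y ∈ star X := by
  obtain ⟨l, hl, rfl⟩ := hx
  obtain ⟨m, hm, rfl⟩ := hy
  refine ⟨l ++ m, ?_, by simp⟩
  intro y hy
  rcases List.mem_append.1 hy with h | h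
  · exact hl y h
  · exact hm y h

lemma star_comp_aux {bar : S → S} {Y : Set (List S)} :
    ∀ l : List (List S), (∀ u ∈ l, comp bar u ∈ Y) → comp bar l.flatten ∈ star Y := by
  intro l
  induction l with
  | nil => intro _; simpa [comp_nil] using star_nil Y
  | cons u l ih =>
    intro h
    have : comp bar (u :: l).flatten = comp bar l.flatten ++ comp bar u := by
      rw [List.flatten_cons, comp_append]
    rw [this]
    exact star_append (ih fun y hy => h y (List.mem_cons_of_mem _ hy))
      (star_single (h u (List.mem_cons_self)))

lemma star_comp {bar : S → S} {X Y : Set (List S)}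
    (h : ∀ u ∈ X, comp bar u ∈ Y) {x : List S} (hx : x ∈ star X) :
    comp bar x ∈ star Y := by
  obtain ⟨l, hl, rfl⟩ := hx
  exact star_comp_aux l fun u hu => h u (hl u hu)

/-! ### The two chunk alphabets -/

def Xs (bar : S → S) (a w : List S) : Set (List S) := Pa a w ∪ barSa bar a w

def Ys (bar : S → S) (a w : List S) : Set (List S) := comp bar '' Pa a w ∪ Sa bar a w

lemma compX_mem_Y {bar : S → S} {a w u : List S} (hu : u ∈ Xs bar a w) :
    comp bar u ∈ Ys bar a w := by
  rcases hu with hu | hu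
  · exact Or.inl ⟨u, hu, rfl⟩
  · exact Or.inr hu

lemma compY_mem_X {bar : S → S} (hbar : Function.Involutive bar) {a w u : List S}
    (hu : u ∈ Ys bar a w) : comp bar u ∈ Xs bar a w := by
  rcases hu with ⟨p, hp, rfl⟩ | hu
  · exact Or.inl (by rwa [comp_comp hbar])
  · refine Or.inr ?_
    show comp bar a ++ comp bar (comp bar u) <:+ w
    rwa [comp_comp hbar]

lemma star_X_comp {bar : S → S} {a w x : List S} (hx : x ∈ star (Xs bar a w)) :
    comp bar x ∈ star (Ys bar a w) := star_comp (fun u hu => compX_mem_Y hu) hx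

lemma star_Y_comp {bar : S → S} (hbar : Function.Involutive bar) {a w x : List S}
    (hx : x ∈ star (Ys bar a w)) : comp bar x ∈ star (Xs bar a w) :=
  star_comp (fun u hu => compY_mem_X hbar hu) hx

/-! ### Suffix `comp a` is preserved by appending star elements -/

lemma bar_suffix_chunk {bar : S → S} {a w : List S} (hp : a <+: w)
    (hs : comp bar a <:+ w) {u : List S} (hu : u ∈ Ys bar a w) :
    comp bar a <:+ comp bar a ++ u := by
  rcases hu with ⟨p, hpa, rfl⟩ | hu
  · have h1 : comp bar a ++ comp bar p <:+ comp bar w := by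
      have h := comp_suffix_of_prefix (bar := bar) hpa
      rwa [comp_append] at h
    exact List.suffix_of_suffix_length_le (comp_suffix_of_prefix hp) h1 (by simp)
  · exact List.suffix_of_suffix_length_le hs hu (by simp)

lemma bar_suffix_star {bar : S → S} {a w : List S} (hp : a <+: w)
    (hs : comp bar a <:+ w) {v t : List S}
    (hv : comp bar a <:+ v) (ht : t ∈ star (Ys bar a w)) :
    comp bar a <:+ v ++ t := by
  obtain ⟨l, hl, rfl⟩ := ht
  induction l generalizing v with
  | nil => simpa using hv
  | cons u l ih =>
    have hvu : comp bar a <:+ v ++ u := by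
      obtain ⟨v₀, rfl⟩ := hv
      have h1 : comp bar a <:+ comp bar a ++ u := bar_suffix_chunk hp hs (hl u (List.mem_cons_self))
      exact h1.trans ⟨v₀, by simp [List.append_assoc]⟩
    have h2 := ih hvu (fun y hy => hl y (List.mem_cons_of_mem _ hy))
    simpa [List.append_assoc] using h2

/-! ### Core invariant -/

structure Core (bar : S → S) (a w z : List S) : Prop where
  c1 : a <+: z
  c2 : comp bar a <:+ z
  nc : ∀ γ₁ δ₁ γ₂ δ₂ : List S, z = γ₁ ++ a ++ δ₁ → z = γ₂ ++ comp bar a ++ δ₂ →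
        γ₁.length ≤ γ₂.length
  p1 : ∀ γ δ : List S, z = γ ++ a ++ δ → γ ∈ star (Xs bar a w)
  p2 : ∀ γ δ : List S, z = γ ++ comp bar a ++ δ → δ ∈ star (Ys bar a w)

/-! ### Occurrence analysis for right completion -/

/-- No occurrence of `a` in `z ++ comp γ₀` sticks out past `z`. -/
lemma occA {bar : S → S} (hbar : Function.Involutive bar) {a z γ₀ δ₀ : List S}
    (ha0 : a ≠ [])
    (hC2 : comp bar a <:+ z)
    (hnc : ∀ γ₁ δ₁ γ₂ δ₂ : List S, z = γ₁ ++ a ++ δ₁ → z = γ₂ ++ comp bar a ++ δ₂ →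
        γ₁.length ≤ γ₂.length)
    (hz : z = γ₀ ++ a ++ δ₀)
    {u v : List S} (hsplit : z ++ comp bar γ₀ = u ++ a ++ v)
    (hbig : z.length < u.length + a.length) : False := by
  have ha0' : 0 < a.length := List.length_pos_iff.2 ha0
  have hcs : γ₀ ++ comp bar z = comp bar v ++ comp bar a ++ comp bar u := by
    have h := congrArg (comp bar) hsplit
    rw [comp_append, comp_comp hbar] at h
    rw [comp_append, comp_append] at h
    rw [h]; simp [List.append_assoc]
  have hlen : z.length + γ₀.length = u.length + a.length + v.length := by
    have h := congrArg List.length hsplit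
    simp [comp_length] at h; omega
  have hzlen : z.length = γ₀.length + a.length + δ₀.length := by
    have h := congrArg List.length hz
    simp at h; omega
  have hvγ : v.length < γ₀.length := by omega
  by_cases hcase : v.length + a.length ≤ γ₀.length
  · obtain ⟨q, hq1, _⟩ := split_left hcs (by simp [comp_length]; omega)
    have h1 : z = (comp bar v ++ comp bar a ++ q) ++ a ++ δ₀ := by rw [hz, hq1]
    have h2 : z = comp bar v ++ comp bar a ++ (q ++ a ++ δ₀) := by
      rw [hz, hq1]; simp [List.append_assoc]
    have h3 := hnc _ _ _ _ h1 h2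
    simp only [List.length_append, comp_length] at h3
    omega
  · push_neg at hcase
    have hpre : comp bar v <+: γ₀ := by
      have h1 : comp bar v <+: γ₀ ++ comp bar z :=
        ⟨comp bar a ++ comp bar u, by rw [hcs]; simp [List.append_assoc]⟩
      exact List.prefix_of_prefix_length_le h1 (List.prefix_append _ _)
        (by simp [comp_length]; omega)
    obtain ⟨ρ, hρ⟩ := hpre
    have hρlen : v.length + ρ.length = γ₀.length := by
      have h := congrArg List.length hρ
      simp [comp_length] at h; omega
    have hred : ρ ++ comp bar z = comp bar a ++ comp bar u := by
      have h2 : comp bar v ++ (ρ ++ comp bar z) = comp bar v ++ (comp bar a ++ comp bar u) := by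
        rw [← List.append_assoc, hρ, hcs]; simp [List.append_assoc]
      exact List.append_cancel_left h2
    have hρa : ρ <+: comp bar a := by
      refine List.prefix_of_prefix_length_le ⟨comp bar z, hred⟩
        (⟨comp bar u, rfl⟩ : comp bar a <+: comp bar a ++ comp bar u) ?_
      simp [comp_length]; omega
    obtain ⟨σ, hσ⟩ := hρa
    have hσlen : ρ.length + σ.length = a.length := by
      have h := congrArg List.length hσ
      simpa [comp_length] using h
    have hcz : comp bar z = σ ++ comp bar u := by
      have h2 : ρ ++ comp bar z = ρ ++ (σ ++ comp bar u) := by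
        rw [hred, ← hσ]; simp [List.append_assoc]
      exact List.append_cancel_left h2
    have hcσz : comp bar σ <:+ z := by
      have h := comp_suffix_of_prefix (bar := bar) (⟨comp bar u, hcz.symm⟩ : σ <+: comp bar z)
      rwa [comp_comp hbar] at h
    have hcσa : comp bar σ <:+ comp bar a :=
      List.suffix_of_suffix_length_le hcσz hC2 (by simp [comp_length]; omega)
    obtain ⟨θ, hθ⟩ := hcσa
    have hlenθ : θ.length = ρ.length := by
      have h := congrArg List.length hθ
      simp [comp_length] at h; omega
    have heq : ρ ++ σ = θ ++ comp bar σ := by rw [hσ, hθ]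
    have hσσ : σ = comp bar σ := (List.append_inj heq hlenθ.symm).2
    have haeq : a = comp bar σ ++ comp bar ρ := by
      have h := congrArg (comp bar) hσ
      rw [comp_append, comp_comp hbar] at h
      exact h.symm
    have haσ : a = σ ++ comp bar ρ := by rw [haeq, ← hσσ]
    have h2 : z = comp bar v ++ (ρ ++ σ) ++ (comp bar ρ ++ δ₀) := by
      rw [hz, ← hρ]
      conv_lhs => rw [haσ]
      simp [List.append_assoc]
    rw [hσ] at h2
    have h3 := hnc _ _ _ _ hz h2
    simp only [List.length_append, comp_length] at h3
    omega

/-- Occurrences of `comp a` sticking out past `z` give an `a`-occurrence. -/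
lemma occB {bar : S → S} (hbar : Function.Involutive bar) {a z γ₀ δ₀ : List S}
    (ha0 : a ≠ [])
    (hC2 : comp bar a <:+ z)
    (hz : z = γ₀ ++ a ++ δ₀)
    {u v : List S} (hsplit : z ++ comp bar γ₀ = u ++ comp bar a ++ v)
    (hbig : z.length < u.length + a.length) :
    ∃ τ, z = comp bar v ++ a ++ τ := by
  have ha0' : 0 < a.length := List.length_pos_iff.2 ha0
  have hcs : γ₀ ++ comp bar z = comp bar v ++ a ++ comp bar u := by
    have h := congrArg (comp bar) hsplit
    rw [comp_append, comp_comp hbar] at h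
    rw [comp_append, comp_append, comp_comp hbar] at h
    rw [h]; simp [List.append_assoc]
  have hlen : z.length + γ₀.length = u.length + a.length + v.length := by
    have h := congrArg List.length hsplit
    simp [comp_length] at h; omega
  have hzlen : z.length = γ₀.length + a.length + δ₀.length := by
    have h := congrArg List.length hz
    simp at h; omega
  have hvγ : v.length < γ₀.length := by omega
  by_cases hcase : v.length + a.length ≤ γ₀.length
  · obtain ⟨q, hq1, _⟩ := split_left hcs (by simp [comp_length]; omega)
    refine ⟨q ++ a ++ δ₀, ?_⟩
    rw [hz, hq1]; simp [List.append_assoc]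
  · push_neg at hcase
    have hpre : comp bar v <+: γ₀ := by
      have h1 : comp bar v <+: γ₀ ++ comp bar z :=
        ⟨a ++ comp bar u, by rw [hcs]; simp [List.append_assoc]⟩
      exact List.prefix_of_prefix_length_le h1 (List.prefix_append _ _)
        (by simp [comp_length]; omega)
    obtain ⟨ρ, hρ⟩ := hpre
    have hρlen : v.length + ρ.length = γ₀.length := by
      have h := congrArg List.length hρ
      simp [comp_length] at h; omega
    have hred : ρ ++ comp bar z = a ++ comp bar u := by
      have h2 : comp bar v ++ (ρ ++ comp bar z) = comp bar v ++ (a ++ comp bar u) := by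
        rw [← List.append_assoc, hρ, hcs]; simp [List.append_assoc]
      exact List.append_cancel_left h2
    have hρa : ρ <+: a := by
      refine List.prefix_of_prefix_length_le ⟨comp bar z, hred⟩
        (⟨comp bar u, rfl⟩ : a <+: a ++ comp bar u) ?_
      omega
    obtain ⟨σ, hσ⟩ := hρa
    have hσlen : ρ.length + σ.length = a.length := by
      have h := congrArg List.length hσ
      simpa using h
    have hcz : comp bar z = σ ++ comp bar u := by
      have h2 : ρ ++ comp bar z = ρ ++ (σ ++ comp bar u) := by
        rw [hred, ← hσ]; simp [List.append_assoc]
      exact List.append_cancel_left h2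
    have hcσz : comp bar σ <:+ z := by
      have h := comp_suffix_of_prefix (bar := bar) (⟨comp bar u, hcz.symm⟩ : σ <+: comp bar z)
      rwa [comp_comp hbar] at h
    have hcσa : comp bar σ <:+ comp bar a :=
      List.suffix_of_suffix_length_le hcσz hC2 (by simp [comp_length]; omega)
    obtain ⟨θ, hθ⟩ := hcσa
    have haθ : a = σ ++ comp bar θ := by
      have h := congrArg (comp bar) hθ
      rw [comp_append, comp_comp hbar, comp_comp hbar] at h
      exact h.symm
    have key : ρ ++ a = a ++ comp bar θ := by
      conv_lhs => rw [haθ]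
      rw [← List.append_assoc, hσ]
    refine ⟨comp bar θ ++ δ₀, ?_⟩
    rw [hz, ← hρ]
    have key2 : (ρ ++ a) ++ δ₀ = (a ++ comp bar θ) ++ δ₀ := by rw [key]
    simp only [List.append_assoc] at key2 ⊢
    rw [key2]

/-! ### Core preservation under right completion -/

lemma RHCore {bar : S → S} (hbar : Function.Involutive bar) {a w z γ₀ δ₀ : List S}
    (ha0 : a ≠ []) (hp : a <+: w) (hs : comp bar a <:+ w)
    (hc : Core bar a w z) (hz : z = γ₀ ++ a ++ δ₀) :
    Core bar a w (z ++ comp bar γ₀) := by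
  have hγ₀X : γ₀ ∈ star (Xs bar a w) := hc.p1 γ₀ δ₀ hz
  have hγ₀Y : comp bar γ₀ ∈ star (Ys bar a w) := star_X_comp hγ₀X
  refine ⟨?_, ?_, ?_, ?_, ?_⟩
  · exact hc.c1.trans (List.prefix_append z (comp bar γ₀))
  · exact bar_suffix_star hp hs hc.c2 hγ₀Y
  · intro γ₁ δ₁ γ₂ δ₂ h1 h2
    have hb1 : γ₁.length + a.length ≤ z.length := by
      by_contra hcon
      exact occA hbar ha0 hc.c2 hc.nc hz h1 (by omega)
    by_cases hb2 : γ₂.length + a.length ≤ z.length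
    · obtain ⟨δ₁', hz1, _⟩ := split_left h1 hb1
      obtain ⟨δ₂', hz2, _⟩ := split_left h2 (by simpa [comp_length] using hb2)
      exact hc.nc _ _ _ _ hz1 hz2
    · omega
  · intro γ δ h
    have hb1 : γ.length + a.length ≤ z.length := by
      by_contra hcon
      exact occA hbar ha0 hc.c2 hc.nc hz h (by omega)
    obtain ⟨δ₁, hz1, _⟩ := split_left h hb1
    exact hc.p1 _ _ hz1
  · intro γ δ h
    by_cases hb : γ.length + a.length ≤ z.length
    · obtain ⟨δ₁, hz1, hδ⟩ := split_left h (by simpa [comp_length] using hb)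
      rw [hδ]
      exact star_append (hc.p2 _ _ hz1) hγ₀Y
    · obtain ⟨τ, hτ⟩ := occB hbar ha0 hc.c2 hz h (by omega)
      have h1 : comp bar δ ∈ star (Xs bar a w) := hc.p1 _ _ hτ
      have h2 := star_X_comp (bar := bar) h1
      rwa [comp_comp hbar] at h2

/-! ### Core is symmetric under `comp` -/

lemma core_comp {bar : S → S} (hbar : Function.Involutive bar) {a w z : List S}
    (hc : Core bar a w z) : Core bar a w (comp bar z) := by
  refine ⟨?_, ?_, ?_, ?_, ?_⟩
  · have h := comp_prefix_of_suffix (bar := bar) hc.c2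
    rwa [comp_comp hbar] at h
  · exact comp_suffix_of_prefix hc.c1
  · intro γ₁ δ₁ γ₂ δ₂ h1 h2
    have e1 : z = comp bar δ₁ ++ comp bar a ++ comp bar γ₁ := by
      have h := congrArg (comp bar) h1
      rw [comp_comp hbar, comp_append, comp_append] at h
      rw [h]; simp [List.append_assoc]
    have e2 : z = comp bar δ₂ ++ a ++ comp bar γ₂ := by
      have h := congrArg (comp bar) h2
      rw [comp_comp hbar, comp_append, comp_append, comp_comp hbar] at h
      rw [h]; simp [List.append_assoc]
    have h3 := hc.nc _ _ _ _ e2 e1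
    have l1 := congrArg List.length h1
    have l2 := congrArg List.length h2
    simp only [List.length_append, comp_length] at h3 l1 l2
    omega
  · intro γ δ h
    have e : z = comp bar δ ++ comp bar a ++ comp bar γ := by
      have h' := congrArg (comp bar) h
      rw [comp_comp hbar, comp_append, comp_append] at h'
      rw [h']; simp [List.append_assoc]
    have h1 := hc.p2 _ _ e
    have h2 := star_Y_comp hbar h1
    rwa [comp_comp hbar] at h2
  · intro γ δ h
    have e : z = comp bar δ ++ a ++ comp bar γ := by
      have h' := congrArg (comp bar) h
      rw [comp_comp hbar, comp_append, comp_append, comp_comp hbar] at h'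
      rw [h']; simp [List.append_assoc]
    have h1 := hc.p1 _ _ e
    have h2 := star_X_comp (bar := bar) h1
    rwa [comp_comp hbar] at h2

/-! ### The base case -/

lemma coreW {bar : S → S} {a w : List S}
    (hp : a <+: w) (hs : comp bar a <:+ w) (hnc : NonCrossing bar a w) :
    Core bar a w w := by
  refine ⟨hp, hs, ?_, ?_, ?_⟩
  · intro γ₁ δ₁ γ₂ δ₂ h1 h2
    have o1 : a <+: w.drop γ₁.length := by
      rw [h1, List.append_assoc, List.drop_left]
      exact List.prefix_append a δ₁
    have o2 : comp bar a <+: w.drop γ₂.length := by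
      rw [h2, List.append_assoc, List.drop_left]
      exact List.prefix_append (comp bar a) δ₂
    exact hnc _ _ o1 o2
  · intro γ δ h
    exact star_single (Or.inl ⟨δ, by rw [h, List.append_assoc]⟩)
  · intro γ δ h
    exact star_single (Or.inr ⟨γ, by rw [h]; simp [List.append_assoc]⟩)

theorem stmt13 (bar : S → S) (hbar : Function.Involutive bar)
    (a w : List S) (ha : a ≠ comp bar a)
    (hp : a <+: w) (hs : comp bar a <:+ w)
    (hnc : NonCrossing bar a w) :
    HCstar bar a w ⊆
      { z | ∃ x ∈ star (Pa a w ∪ barSa bar a w),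
          ∃ y ∈ star (comp bar '' Pa a w ∪ Sa bar a w), z = x ++ w ++ y } := by
  have ha0 : a ≠ [] := by
    intro h
    exact ha (by rw [h]; rfl)
  intro z hz
  have hmain : Core bar a w z ∧
      ∃ x ∈ star (Xs bar a w), ∃ y ∈ star (Ys bar a w), z = x ++ w ++ y := by
    induction hz with
    | refl =>
      exact ⟨coreW hp hs hnc, [], star_nil _, [], star_nil _, by simp⟩
    | @tail b c hwb hbc ih =>
      obtain ⟨hcore, x, hx, y, hy, hbxy⟩ := ih
      rcases hbc with ⟨γ, β, hb, hceq⟩ | ⟨γ, β, hb, hceq⟩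
      · -- right completion : c = b ++ comp γ
        have hb' : b = γ ++ a ++ (β ++ comp bar a) := by
          rw [hb]; simp [List.append_assoc]
        have hcγY : comp bar γ ∈ star (Ys bar a w) :=
          star_X_comp (hcore.p1 γ (β ++ comp bar a) hb')
        refine ⟨by rw [hceq]; exact RHCore hbar ha0 hp hs hcore hb', x, hx,
          y ++ comp bar γ, star_append hy hcγY, ?_⟩
        rw [hceq, hbxy]; simp [List.append_assoc]
      · -- left completion : c = γ ++ b
        have hb' : b = (a ++ β) ++ comp bar a ++ comp bar γ := hb
        have hcγY : comp bar γ ∈ star (Ys bar a w) := hcore.p2 _ _ hb'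
        have hγX : γ ∈ star (Xs bar a w) := by
          have h1 := star_Y_comp hbar hcγY
          rwa [comp_comp hbar] at h1
        have hcb : comp bar b = γ ++ a ++ (comp bar β ++ comp bar a) := by
          rw [hb]
          rw [comp_append, comp_append, comp_append, comp_comp hbar, comp_comp hbar]
          simp [List.append_assoc]
        have h2 : Core bar a w (comp bar b ++ comp bar γ) :=
          RHCore hbar ha0 hp hs (core_comp hbar hcore) hcb
        have h3 : Core bar a w (comp bar (comp bar b ++ comp bar γ)) := core_comp hbar h2
        have h4 : comp bar (comp bar b ++ comp bar γ) = γ ++ b := by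
          rw [comp_append, comp_comp hbar, comp_comp hbar]
        rw [h4, ← hceq] at h3
        exact ⟨h3, γ ++ x, star_append hγX hx, y, hy, by
          rw [hceq, hbxy]; simp [List.append_assoc]⟩
  obtain ⟨-, x, hx, y, hy, hxy⟩ := hmain
  exact ⟨x, hx, y, hy, hxy⟩

end Hairpin
end
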